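/- Let f : ℝ^{d_x} × ℝ^{d_y} → ℝ be differentiable and suppose that for every y the map x ↦ ∇_x f(x,y) is L_x-Lipschitz and for every x the map y ↦ ∇_y f(x,y) is L_y-Lipschitz. Then for all μ₁ > 0, μ₂ > 0 and all (x,y): |f_{μ₁}(x,y) − f(x,y)| ≤ L_x μ₁² / 2 and |f_{μ₂}(x,y) − f(x,y)| ≤ L_y μ₂² / 2. -/

import Mathlib

open MeasureTheory Metric
open scoped ENNReal RealInnerProductSpace

/-- Uniform probability measure on the closed unit Euclidean ball of `ℝ^d`
(normalized Lebesgue measure on the ball). -/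
noncomputable def ballUniform (d : ℕ) : Measure (EuclideanSpace ℝ (Fin d)) :=
  (volume (closedBall (0 : EuclideanSpace ℝ (Fin d)) 1))⁻¹ •
    volume.restrict (closedBall (0 : EuclideanSpace ℝ (Fin d)) 1)

/-- Uniform probability measure on the unit Euclidean sphere of `ℝ^d`, realized as the
pushforward of the uniform measure on the unit ball under the radial projection
`x ↦ x/‖x‖`; this coincides with the normalized surface (rotation invariant) measure. -/
noncomputable def sphereUniform (d : ℕ) : Measure (EuclideanSpace ℝ (Fin d)) :=
  (ballUniform d).map fun x => ‖x‖⁻¹ • x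

section Aux

variable {d : ℕ}

lemma ballVol_ne_zero (d : ℕ) :
    volume (closedBall (0 : EuclideanSpace ℝ (Fin d)) 1) ≠ 0 :=
  (measure_closedBall_pos _ _ one_pos).ne'

lemma ballVol_ne_top (d : ℕ) :
    volume (closedBall (0 : EuclideanSpace ℝ (Fin d)) 1) ≠ ⊤ :=
  measure_closedBall_lt_top.ne

instance ballUniform_isProb (d : ℕ) : IsProbabilityMeasure (ballUniform d) := by
  constructor
  simp only [ballUniform, Measure.smul_apply, Measure.restrict_apply MeasurableSet.univ,
    Set.univ_inter, smul_eq_mul]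
  exact ENNReal.inv_mul_cancel (ballVol_ne_zero d) (ballVol_ne_top d)

lemma integrable_ballUniform {g : EuclideanSpace ℝ (Fin d) → ℝ} (hg : Continuous g) :
    Integrable g (ballUniform d) := by
  have h : IntegrableOn g (closedBall (0 : EuclideanSpace ℝ (Fin d)) 1) volume :=
    hg.continuousOn.integrableOn_compact (isCompact_closedBall _ _)
  exact h.smul_measure (ENNReal.inv_ne_top.mpr (ballVol_ne_zero d))

lemma map_neg_ballUniform (d : ℕ) :
    Measure.map (fun u => -u) (ballUniform d) = ballUniform d := by
  have hB : (fun u : EuclideanSpace ℝ (Fin d) => -u) ⁻¹' closedBall 0 1 = closedBall 0 1 := by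
    ext u; simp
  have hemb : MeasurableEmbedding (fun u : EuclideanSpace ℝ (Fin d) => -u) :=
    (Homeomorph.neg (EuclideanSpace ℝ (Fin d))).measurableEmbedding
  rw [ballUniform, Measure.map_smul]
  congr 1
  have := hemb.restrict_map (volume : Measure (EuclideanSpace ℝ (Fin d)))
    (closedBall 0 1)
  rw [← hB, ← hemb.restrict_map]
  have hneg : Measure.map (fun u : EuclideanSpace ℝ (Fin d) => -u) volume = volume :=
    Measure.map_neg_eq_self _
  rw [hneg, hB]

lemma integral_inner_ballUniform (d : ℕ) (g : EuclideanSpace ℝ (Fin d)) :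
    ∫ u, ⟪g, u⟫ ∂(ballUniform d) = 0 := by
  have hmeas : AEStronglyMeasurable (fun u : EuclideanSpace ℝ (Fin d) => ⟪g, u⟫)
      (ballUniform d) := (continuous_const.inner continuous_id).aestronglyMeasurable
  have h : ∫ u, ⟪g, u⟫ ∂(ballUniform d) = ∫ u, ⟪g, -u⟫ ∂(ballUniform d) := by
    conv_lhs => rw [← map_neg_ballUniform d]
    rw [integral_map (measurable_neg.aemeasurable) (by
      rw [map_neg_ballUniform d]; exact hmeas)]
  have h2 : ∫ u, ⟪g, -u⟫ ∂(ballUniform d) = - ∫ u, ⟪g, u⟫ ∂(ballUniform d) := by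
    rw [← integral_neg]
    congr 1
    ext u
    simp [inner_neg_right]
  linarith [h, h2]

lemma taylor_bound {g : EuclideanSpace ℝ (Fin d) → ℝ} (hg : Differentiable ℝ g)
    {L : ℝ} (hL : 0 ≤ L)
    (hlip : ∀ a b, ‖gradient g a - gradient g b‖ ≤ L * ‖a - b‖)
    (a v : EuclideanSpace ℝ (Fin d)) :
    |g (a + v) - g a - ⟪gradient g a, v⟫| ≤ L / 2 * ‖v‖ ^ 2 := by
  -- gradient is continuous
  have hgc : Continuous (gradient g) := by
    refine LipschitzWith.continuous (K := L.toNNReal) (LipschitzWith.of_dist_le_mul ?_)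
    intro a b
    rw [dist_eq_norm, dist_eq_norm]
    exact le_trans (hlip a b) (by
      gcongr
      exact Real.le_coe_toNNReal L)
  have hφ : ∀ t : ℝ, HasDerivAt (fun t : ℝ => g (a + t • v))
      (⟪gradient g (a + t • v), v⟫) t := by
    intro t
    have h1 : HasFDerivAt g (fderiv ℝ g (a + t • v)) (a + t • v) := (hg _).hasFDerivAt
    have h2 : HasDerivAt (fun t : ℝ => a + t • v) v t := by
      simpa using ((hasDerivAt_id t).smul_const v).const_add a
    have := h1.comp_hasDerivAt t h2
    have hinner : ⟪gradient g (a + t • v), v⟫ = fderiv ℝ g (a + t • v) v :=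
      InnerProductSpace.toDual_symm_apply
    rw [hinner]
    exact this
  have hcont : Continuous fun t : ℝ => ⟪gradient g (a + t • v), v⟫ := by
    exact ((hgc.comp (by continuity)).inner continuous_const)
  have key : g (a + v) - g a = ∫ t in (0:ℝ)..1, ⟪gradient g (a + t • v), v⟫ := by
    rw [intervalIntegral.integral_eq_sub_of_hasDerivAt (fun t _ => hφ t)
      (hcont.intervalIntegrable 0 1)]
    simp
  have const_eq : ⟪gradient g a, v⟫ = ∫ t in (0:ℝ)..1, ⟪gradient g a, v⟫ := by
    simp
  have diff_eq : g (a + v) - g a - ⟪gradient g a, v⟫ =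
      ∫ t in (0:ℝ)..1, ⟪gradient g (a + t • v) - gradient g a, v⟫ := by
    rw [key, const_eq]
    rw [← intervalIntegral.integral_sub (hcont.intervalIntegrable 0 1)
      (intervalIntegrable_const)]
    congr 1
    ext t
    rw [inner_sub_left]
  rw [diff_eq]
  have hbound : ∀ t ∈ Set.uIoc (0:ℝ) 1,
      ‖⟪gradient g (a + t • v) - gradient g a, v⟫‖ ≤ t * (L * ‖v‖ ^ 2) := by
    intro t ht
    rw [Set.uIoc_of_le (by norm_num : (0:ℝ) ≤ 1)] at ht
    have ht0 : 0 < t := ht.1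
    calc ‖⟪gradient g (a + t • v) - gradient g a, v⟫‖
        ≤ ‖gradient g (a + t • v) - gradient g a‖ * ‖v‖ := by
          exact abs_real_inner_le_norm _ _
      _ ≤ (L * ‖a + t • v - a‖) * ‖v‖ := by
          gcongr; exact hlip _ _
      _ = t * (L * ‖v‖ ^ 2) := by
          rw [add_sub_cancel_left, norm_smul]
          simp [Real.norm_eq_abs, abs_of_pos ht0]
          ring
  have hIb : IntervalIntegrable (fun t => t * (L * ‖v‖ ^ 2)) volume 0 1 :=
    (continuous_id.mul continuous_const).intervalIntegrable 0 1
  have hmain := intervalIntegral.norm_integral_le_abs_of_norm_le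
    (f := fun t => ⟪gradient g (a + t • v) - gradient g a, v⟫)
    (μ := volume) (a := 0) (b := 1)
    (by filter_upwards [ae_restrict_mem measurableSet_uIoc] with t ht using hbound t ht)
    hIb
  have hval : ∫ t in (0:ℝ)..1, t * (L * ‖v‖ ^ 2) = L / 2 * ‖v‖ ^ 2 := by
    rw [intervalIntegral.integral_mul_const, integral_id]; ring
  calc |∫ t in (0:ℝ)..1, ⟪gradient g (a + t • v) - gradient g a, v⟫|
      = ‖∫ t in (0:ℝ)..1, ⟪gradient g (a + t • v) - gradient g a, v⟫‖ :=
        (Real.norm_eq_abs _).symm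
    _ ≤ |∫ t in (0:ℝ)..1, t * (L * ‖v‖ ^ 2)| := hmain
    _ = L / 2 * ‖v‖ ^ 2 := by
        rw [hval, abs_of_nonneg (by positivity)]

lemma key_ball (d : ℕ) (g : EuclideanSpace ℝ (Fin d) → ℝ) (hg : Differentiable ℝ g)
    (L μ : ℝ) (hL : 0 ≤ L) (hμ : 0 < μ)
    (hlip : ∀ a b, ‖gradient g a - gradient g b‖ ≤ L * ‖a - b‖)
    (x : EuclideanSpace ℝ (Fin d)) :
    |(∫ u, g (x + μ • u) ∂(ballUniform d)) - g x| ≤ L * μ ^ 2 / 2 := by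
  set G := gradient g x with hG
  have h0 : ∫ u, ⟪G, μ • u⟫ ∂(ballUniform d) = 0 := by
    have : ∀ u : EuclideanSpace ℝ (Fin d), ⟪G, μ • u⟫ = μ * ⟪G, u⟫ := fun u =>
      real_inner_smul_right G u μ
    simp only [this]
    rw [integral_const_mul, integral_inner_ballUniform, mul_zero]
  have hgc : Continuous g := hg.continuous
  have hint1 : Integrable (fun u => g (x + μ • u)) (ballUniform d) :=
    integrable_ballUniform (hgc.comp (continuous_const.add (continuous_id.const_smul μ)))
  have hint2 : Integrable (fun u : EuclideanSpace ℝ (Fin d) => ⟪G, μ • u⟫)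
      (ballUniform d) := integrable_ballUniform
        (continuous_const.inner (continuous_id.const_smul μ))
  have heq : (∫ u, g (x + μ • u) ∂(ballUniform d)) - g x =
      ∫ u, (g (x + μ • u) - g x - ⟪G, μ • u⟫) ∂(ballUniform d) := by
    have e1 : ∫ u, (g (x + μ • u) - g x - ⟪G, μ • u⟫) ∂(ballUniform d) =
        (∫ u, (g (x + μ • u) - g x) ∂(ballUniform d)) - ∫ u, ⟪G, μ • u⟫ ∂(ballUniform d) :=
      integral_sub (hint1.sub (integrable_const (g x))) hint2
    have e2 : ∫ u, (g (x + μ • u) - g x) ∂(ballUniform d) =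
        (∫ u, g (x + μ • u) ∂(ballUniform d)) - ∫ _u, g x ∂(ballUniform d) :=
      integral_sub hint1 (integrable_const (g x))
    rw [e1, e2, h0, integral_const]
    simp
  rw [heq]
  have hmem : ∀ᵐ u ∂(ballUniform d), u ∈ closedBall (0 : EuclideanSpace ℝ (Fin d)) 1 := by
    rw [ballUniform]
    exact Measure.ae_smul_measure (ae_restrict_mem measurableSet_closedBall) _
  have hb : ∀ᵐ u ∂(ballUniform d),
      ‖g (x + μ • u) - g x - ⟪G, μ • u⟫‖ ≤ L * μ ^ 2 / 2 := by
    filter_upwards [hmem] with u hu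
    have h1 := taylor_bound hg hL hlip x (μ • u)
    rw [Real.norm_eq_abs]
    refine le_trans h1 ?_
    have hnu : ‖u‖ ≤ 1 := by simpa using mem_closedBall_iff_norm.mp hu
    have hsq : ‖u‖ ^ 2 ≤ 1 := by nlinarith [norm_nonneg u]
    have : ‖μ • u‖ ^ 2 ≤ μ ^ 2 := by
      rw [norm_smul, Real.norm_eq_abs, abs_of_pos hμ, mul_pow]
      nlinarith [sq_nonneg μ]
    nlinarith
  calc |∫ u, (g (x + μ • u) - g x - ⟪G, μ • u⟫) ∂(ballUniform d)|
      ≤ L * μ ^ 2 / 2 * ((ballUniform d) Set.univ).toReal :=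
        norm_integral_le_of_norm_le_const hb
    _ = L * μ ^ 2 / 2 := by simp

end Aux

/-- `|f_{μ₁}(x,y) − f(x,y)| ≤ L_x μ₁²/2` and `|f_{μ₂}(x,y) − f(x,y)| ≤ L_y μ₂²/2`. -/
theorem smoothed_function_gap
    (dx dy : ℕ) (hdx : 1 ≤ dx) (hdy : 1 ≤ dy)
    (f : EuclideanSpace ℝ (Fin dx) → EuclideanSpace ℝ (Fin dy) → ℝ)
    (hdiff : Differentiable ℝ
      fun p : EuclideanSpace ℝ (Fin dx) × EuclideanSpace ℝ (Fin dy) => f p.1 p.2)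
    (Lx Ly : ℝ)
    (hlipx : ∀ (y : EuclideanSpace ℝ (Fin dy)) (x₁ x₂ : EuclideanSpace ℝ (Fin dx)),
      ‖gradient (fun x => f x y) x₁ - gradient (fun x => f x y) x₂‖ ≤ Lx * ‖x₁ - x₂‖)
    (hlipy : ∀ (x : EuclideanSpace ℝ (Fin dx)) (y₁ y₂ : EuclideanSpace ℝ (Fin dy)),
      ‖gradient (fun y => f x y) y₁ - gradient (fun y => f x y) y₂‖ ≤ Ly * ‖y₁ - y₂‖)
    (μ₁ μ₂ : ℝ) (hμ₁ : 0 < μ₁) (hμ₂ : 0 < μ₂) :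
    ∀ (x : EuclideanSpace ℝ (Fin dx)) (y : EuclideanSpace ℝ (Fin dy)),
      |(∫ u, f (x + μ₁ • u) y ∂(ballUniform dx)) - f x y| ≤ Lx * μ₁ ^ 2 / 2 ∧
      |(∫ v, f x (y + μ₂ • v) ∂(ballUniform dy)) - f x y| ≤ Ly * μ₂ ^ 2 / 2 := by
  intro x y
  -- nonnegativity of the Lipschitz constants
  have ex : (EuclideanSpace.single (⟨0, hdx⟩ : Fin dx) (1:ℝ) : EuclideanSpace ℝ (Fin dx)) ≠ 0 := by
    intro h
    have := congrArg (fun z => z (⟨0, hdx⟩ : Fin dx)) h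
    simp at this
  have hLx : 0 ≤ Lx := by
    have h := hlipx y 0 (EuclideanSpace.single (⟨0, hdx⟩ : Fin dx) (1:ℝ))
    have hn : (0:ℝ) < ‖(0:EuclideanSpace ℝ (Fin dx)) -
        EuclideanSpace.single (⟨0, hdx⟩ : Fin dx) (1:ℝ)‖ := by
      rw [zero_sub, norm_neg]
      exact norm_pos_iff.mpr ex
    nlinarith [norm_nonneg (gradient (fun x => f x y) 0 -
      gradient (fun x => f x y) (EuclideanSpace.single (⟨0, hdx⟩ : Fin dx) (1:ℝ)))]
  have ey : (EuclideanSpace.single (⟨0, hdy⟩ : Fin dy) (1:ℝ) : EuclideanSpace ℝ (Fin dy)) ≠ 0 := by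
    intro h
    have := congrArg (fun z => z (⟨0, hdy⟩ : Fin dy)) h
    simp at this
  have hLy : 0 ≤ Ly := by
    have h := hlipy x 0 (EuclideanSpace.single (⟨0, hdy⟩ : Fin dy) (1:ℝ))
    have hn : (0:ℝ) < ‖(0:EuclideanSpace ℝ (Fin dy)) -
        EuclideanSpace.single (⟨0, hdy⟩ : Fin dy) (1:ℝ)‖ := by
      rw [zero_sub, norm_neg]
      exact norm_pos_iff.mpr ey
    nlinarith [norm_nonneg (gradient (fun y => f x y) 0 -
      gradient (fun y => f x y) (EuclideanSpace.single (⟨0, hdy⟩ : Fin dy) (1:ℝ)))]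
  constructor
  · exact key_ball dx (fun x' => f x' y)
      (hdiff.comp (differentiable_id.prodMk (differentiable_const y)))
      Lx μ₁ hLx hμ₁ (hlipx y) x
  · exact key_ball dy (fun y' => f x y')
      (hdiff.comp ((differentiable_const x).prodMk differentiable_id))
      Ly μ₂ hLy hμ₂ (hlipy x) y
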